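/- arXiv:2409.00229 — 10 statements merged into one kernel-verified Lean document; each statement's English description precedes it below -/
import Mathlib

section
/- The sequence of partial sums G_n(α) = ∑_{k=2}^{n} α/(A k + α·B k) converges uniformly on [0, +∞) as n → ∞; consequently the series ∑_{k=2}^∞ α/(A k + α·B k) defines a function of α that is the uniform limit of its partial sums on [0, +∞). -/
open Filter Finset

/-- the partial sums `G_n(α) = ∑_{k=2}^n α/(A k + α·B k)` converge
uniformly on `[0, +∞)`; that is, there is a function `G` on `ℝ` which is the
uniform limit of the partial sums on `[0, +∞)`. -/
theorem G_tendstoUniformlyOn (φ ψ : ℝ)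
    (hφ : φ = (1 + Real.sqrt 5) / 2) (hψ : ψ = (1 - Real.sqrt 5) / 2)
    (A B : ℕ → ℝ)
    (hA : ∀ n, A n = (φ ^ (n - 1) - ψ ^ (n - 1)) / (φ - ψ))
    (hB : ∀ n, B n = (φ * ψ ^ (n - 1) - ψ * φ ^ (n - 1)) / (φ - ψ)) :
    ∃ G : ℝ → ℝ,
      TendstoUniformlyOn
        (fun (n : ℕ) (α : ℝ) => ∑ k ∈ Finset.Icc 2 n, α / (A k + α * B k))
        G Filter.atTop (Set.Ici 0) := by
  subst hφ hψ
  have h5 : (0:ℝ) < Real.sqrt 5 := Real.sqrt_pos.mpr (by norm_num)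
  have h5sq : Real.sqrt 5 ^ 2 = 5 := Real.sq_sqrt (by norm_num)
  have hsub : (1 + Real.sqrt 5) / 2 - (1 - Real.sqrt 5) / 2 = Real.sqrt 5 := by ring
  have hmul : (1 + Real.sqrt 5) / 2 * ((1 - Real.sqrt 5) / 2) = -1 := by nlinarith [h5sq]
  have hAf : ∀ j : ℕ, A (j + 2) = Nat.fib (j + 1) := by
    intro j
    rw [hA, Real.coe_fib_eq]
    have e : (j + 2 - 1) = j + 1 := rfl
    rw [e, hsub]
  have hBf : ∀ j : ℕ, B (j + 2) = Nat.fib j := by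
    intro j
    rw [hB, Real.coe_fib_eq]
    have e : (j + 2 - 1) = j + 1 := rfl
    rw [e, hsub, pow_succ, pow_succ]
    show ((1 + Real.sqrt 5) / 2 * (((1 - Real.sqrt 5) / 2) ^ j * ((1 - Real.sqrt 5) / 2))
      - (1 - Real.sqrt 5) / 2 * (((1 + Real.sqrt 5) / 2) ^ j * ((1 + Real.sqrt 5) / 2)))
      / Real.sqrt 5
      = (((1 + Real.sqrt 5) / 2) ^ j - ((1 - Real.sqrt 5) / 2) ^ j) / Real.sqrt 5
    rw [div_eq_div_iff h5.ne' h5.ne']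
    linear_combination (Real.sqrt 5 * (((1 - Real.sqrt 5) / 2) ^ j
      - ((1 + Real.sqrt 5) / 2) ^ j)) * hmul
  have hfibpos : ∀ n : ℕ, (0:ℝ) < Nat.fib (n + 1) := by
    intro n
    exact_mod_cast Nat.fib_pos.mpr (Nat.succ_pos n)
  -- the majorant
  set u : ℕ → ℝ := fun j => ((Nat.fib (j + 1) : ℝ))⁻¹ with hu_def
  have husum : Summable u := by
    apply summable_of_ratio_norm_eventually_le (r := 2/3) (by norm_num)
    filter_upwards [eventually_ge_atTop 1] with n hn
    have key : 3 * Nat.fib (n + 1) ≤ 2 * Nat.fib (n + 2) := by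
      obtain ⟨m, rfl⟩ := Nat.exists_eq_add_of_le hn
      have h1 : Nat.fib (1 + m + 2) = Nat.fib (1 + m) + Nat.fib (1 + m + 1) :=
        Nat.fib_add_two
      have h2 : Nat.fib (1 + m + 1) = Nat.fib (m) + Nat.fib (m + 1) := by
        have : 1 + m + 1 = m + 2 := by omega
        rw [this, Nat.fib_add_two]
      have h3 : Nat.fib m ≤ Nat.fib (m + 1) := Nat.fib_le_fib_succ
      have h4 : 1 + m = m + 1 := by omega
      rw [h4] at h1 h2 ⊢
      omega
    have keyR : 3 * (Nat.fib (n + 1) : ℝ) ≤ 2 * (Nat.fib (n + 2) : ℝ) := by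
      exact_mod_cast key
    have hb := hfibpos n
    have hc := hfibpos (n + 1)
    rw [hu_def]
    simp only [Real.norm_eq_abs, abs_of_pos (inv_pos.mpr hb), abs_of_pos (inv_pos.mpr hc)]
    have e1 : (2:ℝ)/3 * ((Nat.fib (n + 1) : ℝ))⁻¹ = 2 / (3 * (Nat.fib (n + 1) : ℝ)) := by
      field_simp
    rw [e1, inv_eq_one_div, div_le_div_iff₀ hc (by positivity)]
    linarith
  -- the tail terms and their bound
  have hbound : ∀ j : ℕ, ∀ α ∈ Set.Ici (0:ℝ),
      ‖α / (A (j + 3) + α * B (j + 3))‖ ≤ u j := by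
    intro j α hα
    have hα0 : (0:ℝ) ≤ α := hα
    have hA3 : A (j + 3) = Nat.fib (j + 2) := hAf (j + 1)
    have hB3 : B (j + 3) = Nat.fib (j + 1) := hBf (j + 1)
    have hf1 := hfibpos j
    have hf2 := hfibpos (j + 1)
    rw [hA3, hB3]
    have hden : (0:ℝ) < (Nat.fib (j + 2) : ℝ) + α * (Nat.fib (j + 1) : ℝ) := by
      have : (0:ℝ) ≤ α * (Nat.fib (j + 1) : ℝ) := by positivity
      linarith
    rw [Real.norm_eq_abs, abs_of_nonneg (div_nonneg hα0 hden.le), hu_def,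
      div_le_iff₀ hden]
    have expand : ((Nat.fib (j + 1) : ℝ))⁻¹ * ((Nat.fib (j + 2) : ℝ)
        + α * (Nat.fib (j + 1) : ℝ))
        = ((Nat.fib (j + 1) : ℝ))⁻¹ * (Nat.fib (j + 2) : ℝ) + α := by
      field_simp
    rw [expand]
    have : (0:ℝ) ≤ ((Nat.fib (j + 1) : ℝ))⁻¹ * (Nat.fib (j + 2) : ℝ) := by positivity
    linarith
  -- uniform convergence of the tail partial sums
  have huc : TendstoUniformlyOn
      (fun N α => ∑ j ∈ Finset.range N, α / (A (j + 3) + α * B (j + 3)))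
      (fun α => ∑' j, α / (A (j + 3) + α * B (j + 3))) atTop (Set.Ici 0) :=
    tendstoUniformlyOn_tsum_nat husum hbound
  have huc2 : TendstoUniformlyOn
      (fun N α => ∑ j ∈ Finset.range (N - 2), α / (A (j + 3) + α * B (j + 3)))
      (fun α => ∑' j, α / (A (j + 3) + α * B (j + 3))) atTop (Set.Ici 0) :=
    fun v hv => (tendsto_sub_atTop_nat 2).eventually (huc v hv)
  -- add the constant first term
  refine ⟨fun α => α / (A 2 + α * B 2) + ∑' j, α / (A (j + 3) + α * B (j + 3)), ?_⟩
  have hadd : TendstoUniformlyOn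
      (fun N α => α / (A 2 + α * B 2)
        + ∑ j ∈ Finset.range (N - 2), α / (A (j + 3) + α * B (j + 3)))
      (fun α => α / (A 2 + α * B 2) + ∑' j, α / (A (j + 3) + α * B (j + 3)))
      atTop (Set.Ici 0) := by
    rw [Metric.tendstoUniformlyOn_iff] at huc2 ⊢
    intro ε hε
    filter_upwards [huc2 ε hε] with N hN α hα
    simpa [dist_add_left] using hN α hα
  refine hadd.congr ?_
  filter_upwards [eventually_ge_atTop 2] with n hn α hα
  dsimp only
  have h1 : Finset.Icc 2 n = Finset.Ico 2 (n + 1) := by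
    rw [Finset.Ico_add_one_right_eq_Icc]
  rw [h1, Finset.sum_Ico_eq_sum_range]
  have h2 : n + 1 - 2 = (n - 2) + 1 := by omega
  rw [h2, Finset.sum_range_succ']
  have h3 : ∀ i : ℕ, 2 + (i + 1) = i + 3 := fun i => by omega
  simp only [h3]
  ring
end

section
/- The function 𝓕(α) = 1 + α + ∑_{k=3}^∞ α/(A k + α·B k) is differentiable on (0, +∞) and satisfies 𝓕′(α) ≥ 1 for all α > 0; in particular, for all 0 < α₁ < α₂ one has 𝓕(α₂) − 𝓕(α₁) ≥ α₂ − α₁, so 𝓕 is strictly increasing on (0, +∞). -/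
open Real

private lemma fib_lb : ∀ k : ℕ, (3/2 : ℝ) ^ k ≤ (Nat.fib (k + 2) : ℝ)
  | 0 => by norm_num
  | 1 => by norm_num
  | (k + 2) => by
    have h1 := fib_lb k
    have h2 := fib_lb (k + 1)
    have hf : (Nat.fib (k + 4) : ℝ) = (Nat.fib (k + 2) : ℝ) + (Nat.fib (k + 3) : ℝ) := by
      have := Nat.fib_add_two (n := k + 2)
      push_cast [this]; ring
    have hp : (0:ℝ) < (3/2:ℝ) ^ k := by positivity
    have : ((3:ℝ)/2) ^ (k+2) = (3/2:ℝ)^k * (9/4) := by ring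
    rw [show k + 2 + 2 = k + 4 from rfl, hf, this]
    have : ((3:ℝ)/2) ^ (k+1) = (3/2:ℝ)^k * (3/2) := by ring
    nlinarith [h1, h2]

/-- the equivalent resistance `𝓕(α) = 1 + α + ∑_{k=3}^∞ α/(A k + α·B k)`
is differentiable on `(0, +∞)` with derivative `≥ 1`; in particular
`𝓕(α₂) - 𝓕(α₁) ≥ α₂ - α₁` for all `0 < α₁ < α₂`, so `𝓕` is strictly increasing. -/
theorem F_deriv_ge_one (φ ψ : ℝ)
    (hφ : φ = (1 + Real.sqrt 5) / 2) (hψ : ψ = (1 - Real.sqrt 5) / 2)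
    (A B : ℕ → ℝ)
    (hA : ∀ n, A n = (φ ^ (n - 1) - ψ ^ (n - 1)) / (φ - ψ))
    (hB : ∀ n, B n = (φ * ψ ^ (n - 1) - ψ * φ ^ (n - 1)) / (φ - ψ))
    (𝓕 : ℝ → ℝ)
    (h𝓕 : ∀ α : ℝ, 𝓕 α = 1 + α + ∑' k : ℕ, α / (A (k + 3) + α * B (k + 3))) :
    (∀ α : ℝ, 0 < α → ∃ d : ℝ, HasDerivAt 𝓕 d α ∧ 1 ≤ d) ∧
      (∀ α₁ α₂ : ℝ, 0 < α₁ → α₁ < α₂ → α₂ - α₁ ≤ 𝓕 α₂ - 𝓕 α₁) ∧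
      StrictMonoOn 𝓕 (Set.Ioi 0) := by
  subst hφ hψ
  -- identify A, B with Fibonacci numbers
  have hmul : goldenRatio * goldenConj = -1 := goldenRatio_mul_goldenConj
  have key : ∀ (k : ℕ) (α : ℝ),
      A (k + 3) + α * B (k + 3) = (Nat.fib (k + 2) : ℝ) + α * (Nat.fib (k + 1) : ℝ) := by
    intro k α
    rw [hA, hB, Real.coe_fib_eq, Real.coe_fib_eq]
    have h1 : (k + 3 : ℕ) - 1 = k + 2 := rfl
    rw [h1, goldenRatio_sub_goldenConj]
    have h2 : goldenRatio * goldenConj ^ (k + 2) - goldenConj * goldenRatio ^ (k + 2)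
        = goldenRatio ^ (k + 1) - goldenConj ^ (k + 1) := by
      have e1 : goldenRatio * goldenConj ^ (k + 2)
          = (goldenRatio * goldenConj) * goldenConj ^ (k + 1) := by ring
      have e2 : goldenConj * goldenRatio ^ (k + 2)
          = (goldenRatio * goldenConj) * goldenRatio ^ (k + 1) := by ring
      rw [e1, e2, hmul]; ring
    rw [h2]
  set C : ℕ → ℝ := fun k => (Nat.fib (k + 2) : ℝ) with hC
  set D : ℕ → ℝ := fun k => (Nat.fib (k + 1) : ℝ) with hD
  have hC1 : ∀ k, (1 : ℝ) ≤ C k := by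
    intro k
    have h : 1 ≤ Nat.fib (k + 2) := Nat.fib_pos.mpr (by omega)
    show (1:ℝ) ≤ (Nat.fib (k + 2) : ℝ)
    exact_mod_cast h
  have hD0 : ∀ k, (0 : ℝ) ≤ D k := fun k => by positivity
  have hden : ∀ (k : ℕ) (α : ℝ), 0 < α → 1 ≤ C k + α * D k := by
    intro k α hα
    nlinarith [hC1 k, hD0 k]
  -- the series functions and their derivatives
  set g : ℕ → ℝ → ℝ := fun k α => α / (C k + α * D k) with hg
  set g' : ℕ → ℝ → ℝ := fun k α => C k / (C k + α * D k) ^ 2 with hg'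
  have hF : ∀ α : ℝ, 𝓕 α = 1 + α + ∑' k : ℕ, g k α := by
    intro α
    rw [h𝓕]
    congr 1
    exact tsum_congr fun k => by rw [key]
  have hderiv : ∀ (k : ℕ) (α : ℝ), α ∈ Set.Ioi (0:ℝ) → HasDerivAt (g k) (g' k α) α := by
    intro k α hα
    have hne : C k + α * D k ≠ 0 := by
      have := hden k α hα; linarith
    have h1 : HasDerivAt (fun x : ℝ => C k + x * D k) (D k) α := by
      simpa using ((hasDerivAt_id α).mul_const (D k)).const_add (C k)
    have := (hasDerivAt_id α).div h1 hne
    refine HasDerivAt.congr_deriv this ?_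
    simp only [hg', id]; ring
  have hbound : ∀ (k : ℕ) (α : ℝ), α ∈ Set.Ioi (0:ℝ) → ‖g' k α‖ ≤ (2/3 : ℝ) ^ k := by
    intro k α hα
    have hd := hden k α hα
    have hCk := hC1 k
    have h1 : (0:ℝ) < (C k + α * D k) ^ 2 := by positivity
    have h2 : ‖g' k α‖ = C k / (C k + α * D k) ^ 2 := by
      rw [hg', Real.norm_eq_abs, abs_of_nonneg (by positivity)]
    rw [h2]
    have hCle : C k ≤ C k + α * D k := by
      have := hD0 k; nlinarith [Set.mem_Ioi.mp hα]
    have h3 : C k / (C k + α * D k) ^ 2 ≤ 1 / C k := by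
      rw [div_le_div_iff₀ h1 (by linarith)]
      nlinarith
    have h4 : (1:ℝ) / C k ≤ (2/3 : ℝ) ^ k := by
      have hfib := fib_lb k
      rw [div_le_iff₀ (by linarith)]
      have : ((2:ℝ)/3) ^ k * (3/2) ^ k = 1 := by
        rw [← mul_pow]; norm_num
      calc (1:ℝ) = (2/3:ℝ)^k * (3/2:ℝ)^k := this.symm
        _ ≤ (2/3:ℝ)^k * C k := by
            apply mul_le_mul_of_nonneg_left _ (by positivity)
            exact hfib
    linarith
  have hu : Summable (fun k : ℕ => (2/3 : ℝ) ^ k) :=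
    summable_geometric_of_lt_one (by norm_num) (by norm_num)
  have hg0 : Summable (fun k => g k 1) := by
    apply Summable.of_nonneg_of_le _ _ hu
    · intro k
      have := hden k 1 one_pos
      positivity
    · intro k
      have hd := hden k 1 one_pos
      have : g k 1 = 1 / (C k + 1 * D k) := by rw [hg]
      rw [this]
      calc 1 / (C k + 1 * D k) ≤ 1 / C k := by
            apply one_div_le_one_div_of_le (by linarith [hC1 k])
            nlinarith [hD0 k, hC1 k]
        _ ≤ (2/3:ℝ)^k := by
            have hfib := fib_lb k
            rw [div_le_iff₀ (by linarith [hC1 k])]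
            have h5 : ((2:ℝ)/3) ^ k * (3/2) ^ k = 1 := by rw [← mul_pow]; norm_num
            calc (1:ℝ) = (2/3:ℝ)^k * (3/2:ℝ)^k := h5.symm
              _ ≤ (2/3:ℝ)^k * C k := mul_le_mul_of_nonneg_left hfib (by positivity)
  -- main derivative statement
  have main : ∀ α : ℝ, 0 < α → HasDerivAt 𝓕 (1 + ∑' k, g' k α) α := by
    intro α hα
    have hsum : HasDerivAt (fun z => ∑' k, g k z) (∑' k, g' k α) α :=
      hasDerivAt_tsum_of_isPreconnected hu isOpen_Ioi (isPreconnected_Ioi)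
        hderiv hbound (Set.mem_Ioi.mpr one_pos) hg0 (Set.mem_Ioi.mpr hα)
    have : HasDerivAt (fun z => 1 + z + ∑' k, g k z) (1 + ∑' k, g' k α) α := by
      have h1 : HasDerivAt (fun z : ℝ => 1 + z) 1 α := by
        simpa using (hasDerivAt_id α).const_add (1:ℝ)
      exact h1.add hsum
    exact this.congr_of_eventuallyEq (Filter.Eventually.of_forall fun x => (hF x))
  have hge1 : ∀ α : ℝ, 0 < α → 1 ≤ 1 + ∑' k, g' k α := by
    intro α hα
    have : 0 ≤ ∑' k, g' k α := tsum_nonneg fun k => by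
      have := hden k α hα
      have : (0:ℝ) < C k + α * D k := by linarith
      positivity
    linarith
  have part2 : ∀ α₁ α₂ : ℝ, 0 < α₁ → α₁ < α₂ → α₂ - α₁ ≤ 𝓕 α₂ - 𝓕 α₁ := by
    intro α₁ α₂ h1 h12
    have hconv : Convex ℝ (Set.Ici α₁) := convex_Ici _
    have hcont : ContinuousOn 𝓕 (Set.Ici α₁) := by
      intro x hx
      have hx0 : 0 < x := lt_of_lt_of_le h1 hx
      exact ((main x hx0).differentiableAt.continuousAt).continuousWithinAt
    have hdiff : DifferentiableOn ℝ 𝓕 (interior (Set.Ici α₁)) := by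
      intro x hx
      rw [interior_Ici] at hx
      have hx0 : 0 < x := lt_trans h1 hx
      exact (main x hx0).differentiableAt.differentiableWithinAt
    have hderivF : ∀ x ∈ interior (Set.Ici α₁), 1 ≤ deriv 𝓕 x := by
      intro x hx
      rw [interior_Ici] at hx
      have hx0 : 0 < x := lt_trans h1 hx
      rw [(main x hx0).deriv]
      exact hge1 x hx0
    have := hconv.mul_sub_le_image_sub_of_le_deriv hcont hdiff hderivF
      α₁ Set.self_mem_Ici α₂ (Set.mem_Ici.mpr h12.le) h12.le
    linarith
  refine ⟨fun α hα => ⟨_, main α hα, hge1 α hα⟩, part2, ?_⟩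
  intro x hx y hy hxy
  have := part2 x y (Set.mem_Ioi.mp hx) hxy
  linarith
end

section
/- For every integer p ≥ 2, the polynomial P_p(x) = x^p − x^{p−1} − x^{p−2} − ⋯ − x − 1 has exactly one positive real root φ₁; moreover φ ≤ φ₁ < 2 where φ = (1+√5)/2, and φ₁ = φ if and only if p = 2. -/
/-- for `p ≥ 2`, the polynomial `P_p(x) = x^p - x^(p-1) - ⋯ - x - 1`
has exactly one positive real root `φ₁`; moreover `φ ≤ φ₁ < 2` where `φ` is the
golden ratio, with `φ₁ = φ` iff `p = 2`. -/
theorem charpoly_unique_positive_root (p : ℕ) (hp : 2 ≤ p) (φ : ℝ)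
    (hφ : φ = (1 + Real.sqrt 5) / 2) :
    ∃ φ₁ : ℝ, 0 < φ₁ ∧ φ₁ ^ p - ∑ k ∈ Finset.range p, φ₁ ^ k = 0 ∧
      (∀ x : ℝ, 0 < x → x ^ p - ∑ k ∈ Finset.range p, x ^ k = 0 → x = φ₁) ∧
      φ ≤ φ₁ ∧ φ₁ < 2 ∧ (φ₁ = φ ↔ p = 2) := by
  obtain ⟨m, rfl⟩ : ∃ m, p = m + 2 := ⟨p - 2, by omega⟩
  set p := m + 2 with hpdef
  have h5 : Real.sqrt 5 ^ 2 = 5 := Real.sq_sqrt (by norm_num)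
  have h5n : (0:ℝ) ≤ Real.sqrt 5 := Real.sqrt_nonneg 5
  have hφ1 : 1 < φ := by rw [hφ]; nlinarith
  have hφ2 : φ < 2 := by rw [hφ]; nlinarith
  have hφsq : φ ^ 2 = φ + 1 := by rw [hφ]; nlinarith
  set f : ℝ → ℝ := fun x => x ^ p - ∑ k ∈ Finset.range p, x ^ k with hf
  -- factorization f x = x^p * g x with g strictly increasing for x > 0
  set g : ℝ → ℝ := fun x => 1 - ∑ k ∈ Finset.range p, (x⁻¹) ^ (k + 1) with hgdef
  have hfg : ∀ x : ℝ, 0 < x → f x = x ^ p * g x := by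
    intro x hx
    simp only [hf, hgdef, mul_sub, mul_one, Finset.mul_sum]
    congr 1
    rw [← Finset.sum_range_reflect]
    refine Finset.sum_congr rfl fun k hk => ?_
    rw [Finset.mem_range] at hk
    rw [inv_pow, ← div_eq_mul_inv, eq_div_iff (by positivity : x ^ (k + 1) ≠ 0), ← pow_add]
    congr 1
    omega
  have hmono : ∀ x y : ℝ, 0 < x → x < y → g x < g y := by
    intro x y hx hxy
    have hy : 0 < y := hx.trans hxy
    have hsum : ∑ k ∈ Finset.range p, (y⁻¹) ^ (k + 1)
        < ∑ k ∈ Finset.range p, (x⁻¹) ^ (k + 1) := by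
      refine Finset.sum_lt_sum_of_nonempty (by simp [hpdef]) fun k _ => ?_
      have hinv : y⁻¹ < x⁻¹ := by
        rw [inv_lt_inv₀ (by positivity) hx]
        exact hxy
      exact pow_lt_pow_left₀ hinv (by positivity) (by omega)
    simp only [hgdef]
    linarith
  have hgzero : ∀ x : ℝ, 0 < x → f x = 0 → g x = 0 := by
    intro x hx h0
    have := hfg x hx
    rw [h0] at this
    have hxp : x ^ p ≠ 0 := by positivity
    exact (mul_eq_zero.1 this.symm).resolve_left hxp
  have uniq : ∀ x y : ℝ, 0 < x → 0 < y → f x = 0 → f y = 0 → x = y := by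
    intro x y hx hy hfx hfy
    have gx := hgzero x hx hfx
    have gy := hgzero y hy hfy
    rcases lt_trichotomy x y with h | h | h
    · exact absurd (gx ▸ gy ▸ hmono x y hx h) (lt_irrefl 0)
    · exact h
    · exact absurd (gy ▸ gx ▸ hmono y x hy h) (lt_irrefl 0)
  -- value at 2
  have hf2 : f 2 = 1 := by
    simp only [hf]
    rw [geom_sum_eq (by norm_num : (2:ℝ) ≠ 1)]
    norm_num
  -- value at φ
  have hφne1 : φ - 1 ≠ 0 := by linarith
  have hfφ : f φ = φ - φ ^ (m + 1) := by
    simp only [hf]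
    rw [geom_sum_eq (by linarith : φ ≠ 1)]
    field_simp
    ring_nf
    linear_combination (φ ^ (m + 1) - 1) * hφsq
  have hfφle : f φ ≤ 0 := by
    rw [hfφ]
    have : φ ^ 1 ≤ φ ^ (m + 1) := pow_le_pow_right₀ hφ1.le (by omega)
    simpa using this
  -- continuity
  have hcont : Continuous f := by
    simp only [hf]
    exact (continuous_pow p).sub (continuous_finset_sum _ fun i _ => continuous_pow i)
  have hivt := intermediate_value_Icc (le_of_lt hφ2) hcont.continuousOn
  have h0mem : (0:ℝ) ∈ Set.Icc (f φ) (f 2) := ⟨hfφle, by rw [hf2]; norm_num⟩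
  obtain ⟨φ₁, hφ₁mem, hφ₁root⟩ := hivt h0mem
  have hφ₁pos : 0 < φ₁ := lt_of_lt_of_le (by linarith) hφ₁mem.1
  have hφ₁lt2 : φ₁ < 2 := by
    rcases lt_or_eq_of_le hφ₁mem.2 with h | h
    · exact h
    · rw [h, hf2] at hφ₁root; norm_num at hφ₁root
  refine ⟨φ₁, hφ₁pos, hφ₁root, fun x hx hx0 => uniq x φ₁ hx hφ₁pos hx0 hφ₁root,
    hφ₁mem.1, hφ₁lt2, ?_⟩
  constructor
  · intro h
    rw [h] at hφ₁root
    rw [hfφ] at hφ₁root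
    by_contra hne
    have hm : 1 ≤ m := by omega
    have : φ ^ 2 ≤ φ ^ (m + 1) := pow_le_pow_right₀ hφ1.le (by omega)
    nlinarith
  · intro h
    have hm : m = 0 := by omega
    have : f φ = 0 := by rw [hfφ, hm]; simp
    exact (uniq φ φ₁ (by linarith) hφ₁pos this hφ₁root).symm
end

section
/- For every integer p ≥ 2, the polynomial P_p(x) = x^p − x^{p−1} − ⋯ − x − 1 has no negative real root when p is odd; when p is even it has exactly one negative real root ξ, which satisfies −1 < ξ ≤ −1/φ, with ξ = −1/φ if and only if p = 2, where φ = (1+√5)/2. -/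
lemma charpoly_key (p : ℕ) (x : ℝ) (hx : x < 0) :
    x ^ p - ∑ k ∈ Finset.range p, x ^ k = 0 ↔ x ^ p * (2 - x) = 1 := by
  have hg := geom_sum_mul x p
  have hx1 : x - 1 ≠ 0 := by intro h; nlinarith
  have hps : x ^ (p + 1) = x ^ p * x := pow_succ x p
  constructor
  · intro h
    linear_combination (1 - x) * h - hg
  · intro h
    have h2 : (x ^ p - ∑ k ∈ Finset.range p, x ^ k) * (x - 1) = 0 := by
      linear_combination -h - hg
    rcases mul_eq_zero.mp h2 with h3 | h3
    · exact h3
    · exact absurd h3 hx1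

lemma charpoly_anti (p : ℕ) (hp : p ≠ 0) (hpe : Even p) {x y : ℝ}
    (hxy : x < y) (hy : y < 0) : y ^ p * (2 - y) < x ^ p * (2 - x) := by
  have hyp : 0 < y ^ p := hpe.pow_pos (ne_of_lt hy)
  have hxp : y ^ p < x ^ p := by
    have h1 : (-y) ^ p < (-x) ^ p :=
      pow_lt_pow_left₀ (by linarith) (by linarith) hp
    rwa [hpe.neg_pow, hpe.neg_pow] at h1
  nlinarith

/-- for `p ≥ 2`, the polynomial `P_p(x) = x^p - x^(p-1) - ⋯ - x - 1`
has no negative real root when `p` is odd; when `p` is even it has exactly one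
negative real root `ξ`, with `-1 < ξ ≤ -1/φ` and `ξ = -1/φ` iff `p = 2`. -/
theorem charpoly_negative_roots (p : ℕ) (hp : 2 ≤ p) (φ : ℝ)
    (hφ : φ = (1 + Real.sqrt 5) / 2) :
    (Odd p → ∀ x : ℝ, x < 0 → x ^ p - ∑ k ∈ Finset.range p, x ^ k ≠ 0) ∧
    (Even p → ∃ ξ : ℝ, ξ < 0 ∧ ξ ^ p - ∑ k ∈ Finset.range p, ξ ^ k = 0 ∧
      (∀ x : ℝ, x < 0 → x ^ p - ∑ k ∈ Finset.range p, x ^ k = 0 → x = ξ) ∧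
      -1 < ξ ∧ ξ ≤ -1 / φ ∧ (ξ = -1 / φ ↔ p = 2)) := by
  have hp0 : p ≠ 0 := by omega
  constructor
  · -- odd case
    intro hodd x hx h
    have h1 := (charpoly_key p x hx).mp h
    have h2 : x ^ p < 0 := hodd.pow_neg hx
    nlinarith
  · -- even case
    intro heven
    have hs5 : Real.sqrt 5 ^ 2 = 5 := Real.sq_sqrt (by norm_num)
    have hs5' : 0 ≤ Real.sqrt 5 := Real.sqrt_nonneg 5
    have hs5gt : 2 < Real.sqrt 5 := by nlinarith
    have hφ1 : 1 < φ := by rw [hφ]; nlinarith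
    have hφ0 : 0 < φ := by linarith
    have hφsq : φ ^ 2 = φ + 1 := by rw [hφ]; nlinarith
    set c : ℝ := 1 / φ with hc
    have hc0 : 0 < c := by positivity
    have hc1 : c < 1 := by
      rw [hc]; rw [div_lt_one hφ0]; exact hφ1
    have hcsq : c ^ 2 = 1 - c := by
      rw [hc]; field_simp; nlinarith
    -- the function g x = x^p * (2 - x)
    set g : ℝ → ℝ := fun x => x ^ p * (2 - x) with hgdef
    -- IVT
    have hcont : ContinuousOn g (Set.Icc (-1 : ℝ) 0) := by
      apply Continuous.continuousOn; continuity
    have hg0 : g 0 = 0 := by simp [hgdef, zero_pow hp0]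
    have hgm1 : g (-1) = 3 := by
      simp [hgdef, heven.neg_one_pow]; norm_num
    have hmem : (1 : ℝ) ∈ Set.Ioo (g 0) (g (-1)) := by
      rw [hg0, hgm1]; constructor <;> norm_num
    obtain ⟨ξ, hξmem, hξval⟩ :=
      intermediate_value_Ioo' (by norm_num : (-1 : ℝ) ≤ 0) hcont hmem
    have hξ1 : -1 < ξ := hξmem.1
    have hξ0 : ξ < 0 := hξmem.2
    have hgξ : ξ ^ p * (2 - ξ) = 1 := hξval
    -- uniqueness helper
    have huniq : ∀ x : ℝ, x < 0 → x ^ p * (2 - x) = 1 → x = ξ := by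
      intro x hx hgx
      rcases lt_trichotomy x ξ with h | h | h
      · have := charpoly_anti p hp0 heven h hξ0
        rw [hgx, hgξ] at this; linarith
      · exact h
      · have := charpoly_anti p hp0 heven h hx
        rw [hgx, hgξ] at this; linarith
    -- value at -c
    have hcpow : (-c) ^ p * (2 - (-c)) = c ^ (p - 2) := by
      rw [heven.neg_pow]
      have hsplit : c ^ p = c ^ (p - 2) * c ^ 2 := by
        rw [← pow_add]; congr 1; omega
      have h4 : (1 - c) * (2 + c) = 1 := by linear_combination -hcsq
      rw [hsplit, hcsq]
      linear_combination c ^ (p - 2) * h4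
    have hnc : (-1 : ℝ) / φ = -c := by rw [hc]; ring
    refine ⟨ξ, hξ0, (charpoly_key p ξ hξ0).mpr hgξ, ?_, hξ1, ?_, ?_⟩
    · intro x hx hroot
      exact huniq x hx ((charpoly_key p x hx).mp hroot)
    · -- ξ ≤ -1/φ
      have hle : c ^ (p - 2) ≤ 1 := pow_le_one₀ hc0.le hc1.le
      rw [hnc]
      by_contra hcon
      push_neg at hcon
      have h1 : -c < ξ := hcon
      have := charpoly_anti p hp0 heven h1 hξ0
      rw [hgξ, hcpow] at this
      linarith
    · constructor
      · intro hξc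
        by_contra hpne
        have hp3 : 1 ≤ p - 2 := by omega
        have hlt : c ^ (p - 2) < 1 := pow_lt_one₀ hc0.le hc1 (by omega)
        rw [hnc] at hξc
        have h1 : c ^ (p - 2) = 1 := by rw [← hcpow, ← hξc]; exact hgξ
        linarith
      · intro hp2
        have h1 : (-c) ^ p * (2 - (-c)) = 1 := by
          rw [hcpow, hp2]; norm_num
        have h2 : -c < 0 := by linarith
        rw [hnc]
        exact (huniq (-c) h2 h1).symm
end

section
/- For every integer p ≥ 2, all complex roots of the polynomial P_p(x) = x^p − x^{p−1} − ⋯ − x − 1 are simple; that is, P_p has p distinct complex roots. -/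
open Polynomial

/-- Strict Bernoulli inequality for naturals `n ≥ 2` and `a > 0`. -/
lemma bernoulli_strict_aux (a : ℝ) (ha : 0 < a) : ∀ n : ℕ, 2 ≤ n → 1 + n * a < (1 + a) ^ n := by
  intro n hn
  induction n with
  | zero => omega
  | succ m ih =>
    rcases Nat.lt_or_ge m 2 with hm | hm
    · interval_cases m
      · omega
      · push_cast; nlinarith
    · have h := ih hm
      have h1 : (0:ℝ) < 1 + a := by linarith
      have : (1 + a) ^ (m + 1) = (1 + a) ^ m * (1 + a) := by ring
      rw [this]
      push_cast
      nlinarith [mul_pos (by positivity : (0:ℝ) < (m:ℝ) * a) ha]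

/-- for `p ≥ 2`, all complex roots of
`P_p(x) = x^p - x^(p-1) - ⋯ - x - 1` are simple; that is, `P_p` has `p`
distinct complex roots. -/
theorem charpoly_roots_simple (p : ℕ) (hp : 2 ≤ p) :
    let P : Polynomial ℂ :=
      Polynomial.X ^ p - ∑ k ∈ Finset.range p, Polynomial.X ^ k
    P.roots.Nodup ∧ Multiset.card P.roots = p := by
  intro P
  obtain ⟨m, rfl⟩ : ∃ m, p = m + 2 := ⟨p - 2, by omega⟩
  -- degree
  have hSdeg : (∑ k ∈ Finset.range (m + 2), (X:ℂ[X]) ^ k).degree < ((m + 2 : ℕ) : WithBot ℕ) := by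
    apply lt_of_le_of_lt (Polynomial.degree_sum_le _ _)
    rw [Finset.sup_lt_iff (by exact_mod_cast WithBot.bot_lt_coe (m + 2))]
    intro k hk
    rw [Polynomial.degree_X_pow]
    exact_mod_cast Finset.mem_range.mp hk
  have hdeg : P.degree = (m + 2 : ℕ) := by
    have := Polynomial.degree_sub_eq_left_of_degree_lt
      (p := (X:ℂ[X]) ^ (m + 2)) (q := ∑ k ∈ Finset.range (m + 2), (X:ℂ[X]) ^ k)
      (by rwa [Polynomial.degree_X_pow])
    rw [show P = (X:ℂ[X]) ^ (m + 2) - ∑ k ∈ Finset.range (m + 2), (X:ℂ[X]) ^ k from rfl, this,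
      Polynomial.degree_X_pow]
  have hnatdeg : P.natDegree = m + 2 := Polynomial.natDegree_eq_of_degree_eq_some hdeg
  -- the key identity (X - 1) * P = X^(m+3) - 2 X^(m+2) + 1
  have hg := geom_sum_mul (X : ℂ[X]) (m + 2)
  have hQ : (X - 1) * P = X ^ (m + 3) - 2 * X ^ (m + 2) + 1 := by
    rw [show P = (X:ℂ[X]) ^ (m + 2) - ∑ k ∈ Finset.range (m + 2), (X:ℂ[X]) ^ k from rfl]
    linear_combination (-1 : ℂ[X]) * hg
  -- separability
  have hsep : P.Separable := by
    rw [Polynomial.Separable]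
    rw [Polynomial.isCoprime_iff_aeval_ne_zero_of_isAlgClosed (k := ℂ) ℂ P (derivative P)]
    intro z
    by_contra hcon
    push_neg at hcon
    obtain ⟨h0, h1⟩ := hcon
    have h0' : P.eval z = 0 := by simpa using h0
    have h1' : P.derivative.eval z = 0 := by simpa using h1
    -- evaluate hQ at z
    have e1 : z ^ (m + 3) - 2 * z ^ (m + 2) + 1 = 0 := by
      have h := congrArg (Polynomial.eval z) hQ
      simp [h0'] at h
      linear_combination -h
    -- evaluate the derivative of hQ at z
    have e2 : ((m:ℂ) + 3) * z ^ (m + 2) - 2 * ((m:ℂ) + 2) * z ^ (m + 1) = 0 := by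
      have h := congrArg (fun q => Polynomial.eval z (Polynomial.derivative q)) hQ
      simp [Polynomial.derivative_mul, Polynomial.derivative_X_pow, h0', h1'] at h
      linear_combination -h
    -- z ≠ 0
    have hz0 : z ≠ 0 := by
      rintro rfl
      simp [zero_pow] at e1
    -- so z = 2(m+2)/(m+3)
    have hm3 : ((m:ℂ) + 3) ≠ 0 := by
      intro h
      have : ((m:ℝ) + 3) = 0 := by exact_mod_cast congrArg Complex.re h
      nlinarith [Nat.cast_nonneg (α := ℝ) m]
    have hzval : z = 2 * ((m:ℂ) + 2) / ((m:ℂ) + 3) := by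
      have hfac : z ^ (m + 1) * (((m:ℂ) + 3) * z - 2 * ((m:ℂ) + 2)) = 0 := by
        linear_combination e2
      rcases mul_eq_zero.mp hfac with h | h
      · exact absurd h (pow_ne_zero _ hz0)
      · field_simp
        linear_combination h
    -- transfer to the reals
    set r : ℝ := 2 * ((m:ℝ) + 2) / ((m:ℝ) + 3) with hr
    have hzr : z = (r : ℂ) := by rw [hzval, hr]; push_cast; ring
    have er : r ^ (m + 3) - 2 * r ^ (m + 2) + 1 = 0 := by
      have : ((r:ℂ)) ^ (m + 3) - 2 * ((r:ℂ)) ^ (m + 2) + 1 = 0 := by rw [← hzr]; exact e1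
      exact_mod_cast this
    -- Bernoulli contradiction
    have hm3R : (0:ℝ) < (m:ℝ) + 3 := by positivity
    have ha : (0:ℝ) < ((m:ℝ) + 1) / ((m:ℝ) + 3) := by positivity
    have hb := bernoulli_strict_aux _ ha (m + 3) (by omega)
    have h1r : (1:ℝ) + ((m:ℝ) + 1) / ((m:ℝ) + 3) = r := by rw [hr]; field_simp; ring
    have hcast : ((m + 3 : ℕ) : ℝ) = (m:ℝ) + 3 := by push_cast; ring
    rw [h1r, hcast] at hb
    have hbb : (m:ℝ) + 2 < r ^ (m + 3) := by
      have : ((m:ℝ) + 3) * (((m:ℝ) + 1) / ((m:ℝ) + 3)) = (m:ℝ) + 1 := by field_simp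
      nlinarith [hb]
    -- but er forces r ^ (m+3) = m + 2
    have hrm2 : r ^ (m + 2) = ((m:ℝ) + 3) / 2 := by
      have hfac : r ^ (m + 2) * (2 - r) = 1 := by
        have hps : r ^ (m + 3) = r ^ (m + 2) * r := by ring
        nlinarith [er, hps]
      have h2r : 2 - r = 2 / ((m:ℝ) + 3) := by rw [hr]; field_simp; ring
      rw [h2r] at hfac
      field_simp at hfac
      linarith
    have hrm3 : r ^ (m + 3) = (m:ℝ) + 2 := by
      have hps : r ^ (m + 3) = r ^ (m + 2) * r := by ring
      rw [hps, hrm2, hr]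
      field_simp
    linarith
  refine ⟨Polynomial.nodup_roots hsep, ?_⟩
  rw [← hnatdeg]
  exact (Polynomial.splits_iff_card_roots.mp (IsAlgClosed.splits P))
end

section
/- For every integer p ≥ 2, if φ₁ denotes the unique positive real root of P_p(x) = x^p − x^{p−1} − ⋯ − x − 1, then every complex root z of P_p with z ≠ φ₁ satisfies |z| < 1. -/
/-- for `p ≥ 2`, if `φ₁` is the unique positive real root of
`P_p(x) = x^p - x^(p-1) - ⋯ - x - 1`, then every other complex root of `P_p`
lies strictly inside the unit circle. -/
theorem charpoly_other_roots_in_unit_disc (p : ℕ) (hp : 2 ≤ p) (φ₁ : ℝ)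
    (hφ₁pos : 0 < φ₁)
    (hφ₁root : φ₁ ^ p - ∑ k ∈ Finset.range p, φ₁ ^ k = 0)
    (hφ₁uniq : ∀ x : ℝ, 0 < x → x ^ p - ∑ k ∈ Finset.range p, x ^ k = 0 → x = φ₁) :
    ∀ z : ℂ, z ^ p - ∑ k ∈ Finset.range p, z ^ k = 0 → z ≠ (φ₁ : ℂ) →
      ‖z‖ < 1 := by
  intro z hz hne
  by_contra hcon
  push_neg at hcon
  set r : ℝ := ‖z‖ with hr
  have hr1 : 1 ≤ r := hcon
  have hrpos : 0 < r := lt_of_lt_of_le one_pos hr1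
  have hzp : z ^ p = ∑ k ∈ Finset.range p, z ^ k := sub_eq_zero.mp hz
  -- triangle inequality: f(r) ≤ 0
  have hfle : r ^ p ≤ ∑ k ∈ Finset.range p, r ^ k := by
    calc r ^ p = ‖z ^ p‖ := by rw [norm_pow]
      _ = ‖∑ k ∈ Finset.range p, z ^ k‖ := by rw [hzp]
      _ ≤ ∑ k ∈ Finset.range p, ‖z ^ k‖ := norm_sum_le _ _
      _ = ∑ k ∈ Finset.range p, r ^ k := by simp [norm_pow, hr]
  -- z^p * (2 - z) = 1
  have hgs : (∑ k ∈ Finset.range p, z ^ k) * (z - 1) = z ^ p - 1 := geom_sum_mul z p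
  rw [← hzp] at hgs
  have hQ : z ^ p * (2 - z) = 1 := by linear_combination -hgs
  have habs : r ^ p * ‖2 - z‖ = 1 := by
    have := congrArg (‖·‖) hQ
    rwa [norm_mul, norm_pow, norm_one] at this
  -- |2 - z| ≥ 2 - r
  have h2r : 2 - r ≤ ‖2 - z‖ := by
    have := norm_sub_norm_le (2 : ℂ) z
    simpa using this
  have hrp_pos : (0:ℝ) < r ^ p := pow_pos hrpos p
  have hle1 : r ^ p * (2 - r) ≤ 1 := by
    calc r ^ p * (2 - r) ≤ r ^ p * ‖2 - z‖ := by
          exact mul_le_mul_of_nonneg_left h2r (le_of_lt hrp_pos)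
      _ = 1 := habs
  -- real geometric sum identity
  have hgsr : (∑ k ∈ Finset.range p, r ^ k) * (r - 1) = r ^ p - 1 := geom_sum_mul r p
  -- key: r^p * (2 - r) = 1
  have key : r ^ p * (2 - r) = 1 := by
    rcases eq_or_lt_of_le hr1 with h1 | h1
    · rw [← h1]; ring
    · -- r > 1 : f(r) ≥ 0, together with f(r) ≤ 0 gives r = φ₁
      have h5 : 0 ≤ (r - 1) * (r ^ p - ∑ k ∈ Finset.range p, r ^ k) := by
        nlinarith [hle1, hgsr]
      have h6 : 0 ≤ r ^ p - ∑ k ∈ Finset.range p, r ^ k := by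
        have hr1' : 0 < r - 1 := sub_pos.mpr h1
        nlinarith [h5, hr1']
      have hfz : r ^ p - ∑ k ∈ Finset.range p, r ^ k = 0 := le_antisymm (by linarith) h6
      have : r = φ₁ := hφ₁uniq r hrpos hfz
      -- from f(r) = 0 and the geometric identity: r^p * (2 - r) = 1
      nlinarith [hgsr, hfz]
  -- hence |2 - z| = 2 - r, forcing z real nonnegative
  have habseq : ‖2 - z‖ = 2 - r := by
    have := habs.trans key.symm
    exact mul_left_cancel₀ (ne_of_gt hrp_pos) this
  have hsq : (‖2 - z‖) ^ 2 = Complex.normSq (2 - z) := Complex.sq_norm _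
  have hsqz : r ^ 2 = z.re ^ 2 + z.im ^ 2 := by
    rw [hr, Complex.sq_norm, Complex.normSq_apply]; ring
  have hnormsq : Complex.normSq (2 - z) = (2 - z.re) ^ 2 + z.im ^ 2 := by
    rw [Complex.normSq_apply]; simp [Complex.sub_re, Complex.sub_im]; ring
  have hre : z.re = r := by
    have : (2 - z.re) ^ 2 + z.im ^ 2 = (2 - r) ^ 2 := by
      rw [← hnormsq, ← hsq, habseq]
    nlinarith [this, hsqz]
  have him : z.im = 0 := by nlinarith [hsqz, hre]
  have hzr : z = (r : ℂ) := by
    apply Complex.ext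
    · simp [hre]
    · simp [him]
  -- transfer the root equation to ℝ
  have hzr' : ((r : ℂ)) ^ p - ∑ k ∈ Finset.range p, (r : ℂ) ^ k = 0 := by rw [← hzr]; exact hz
  have hreal : r ^ p - ∑ k ∈ Finset.range p, r ^ k = 0 := by
    exact_mod_cast hzr'
  have : r = φ₁ := hφ₁uniq r hrpos hreal
  exact hne (by rw [hzr, this])
end

section
/- For every integer n ≥ 1, the only complex number z with |z| = 1 satisfying z^{n+1} − 2·z^n + 1 = 0 is z = 1. -/
/-- for every `n ≥ 1`, the only complex number `z` on the unit
circle with `z^(n+1) - 2·z^n + 1 = 0` is `z = 1`. -/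
theorem G_poly_unit_circle_root (n : ℕ) (hn : 1 ≤ n) :
    ∀ z : ℂ, ‖z‖ = 1 → z ^ (n + 1) - 2 * z ^ n + 1 = 0 → z = 1 := by
  intro z habs heq
  have key : z ^ n * (z - 2) = -1 := by ring_nf; ring_nf at heq; linear_combination heq
  have h2 : ‖z ^ n * (z - 2)‖ = 1 := by rw [key]; simp
  rw [norm_mul, norm_pow, habs, one_pow, one_mul] at h2
  -- |z - 2| = 1 and |z| = 1 imply z = 1
  have hsq : ‖z - 2‖ ^ 2 = 1 := by rw [h2]; norm_num
  have hsq1 : ‖z‖ ^ 2 = 1 := by rw [habs]; norm_num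
  rw [Complex.sq_norm, Complex.normSq_apply] at hsq hsq1
  simp only [Complex.sub_re, Complex.sub_im] at hsq
  have : Complex.re (2 : ℂ) = 2 := by simp
  have him : Complex.im (2 : ℂ) = 0 := by simp
  rw [this, him] at hsq
  have hre : z.re = 1 := by nlinarith
  have him2 : z.im = 0 := by nlinarith
  exact Complex.ext hre him2
end

section
/- Let p ≥ 2 be an integer and let r₁, …, r_p be positive reals. Define h : ℕ → ℝ by h k = r₁ / r k for 1 ≤ k ≤ p and h k = ∑_{j=1}^{p} h (k−j) for k > p. Then h k > 0 for all k ≥ 1 and the series ∑_{k=1}^∞ 1/h k converges. -/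
/-- for a `p`-order type-1 Fibonacci resistor network with positive
initial resistances `r 1, …, r p`, the sequence `h k` (with `h k = r 1 / r k` for
`1 ≤ k ≤ p` and the `p`-order Fibonacci recurrence afterwards) is positive and
the series `∑_{k=1}^∞ 1 / h k` converges. -/
theorem p_order_network_summable (p : ℕ) (hp : 2 ≤ p) (r : ℕ → ℝ)
    (hr : ∀ k, 1 ≤ k → k ≤ p → 0 < r k) (h : ℕ → ℝ)
    (hinit : ∀ k, 1 ≤ k → k ≤ p → h k = r 1 / r k)
    (hrec : ∀ k, p < k → h k = ∑ j ∈ Finset.Icc 1 p, h (k - j)) :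
    (∀ k, 1 ≤ k → 0 < h k) ∧ Summable (fun k : ℕ => 1 / h (k + 1)) := by
  have hpos : ∀ k, 1 ≤ k → 0 < h k := by
    intro k
    induction k using Nat.strong_induction_on with
    | _ k ih =>
      intro hk
      by_cases hkp : k ≤ p
      · rw [hinit k hk hkp]
        exact div_pos (hr 1 le_rfl (by omega)) (hr k hk hkp)
      · push_neg at hkp
        rw [hrec k hkp]
        apply Finset.sum_pos
        · intro j hj
          rw [Finset.mem_Icc] at hj
          exact ih (k - j) (by omega) (by omega)
        · exact ⟨1, Finset.mem_Icc.mpr ⟨le_rfl, by omega⟩⟩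
  refine ⟨hpos, ?_⟩
  have hmono : ∀ k, p ≤ k → h k ≤ h (k + 1) := by
    intro k hk
    rw [hrec (k + 1) (by omega)]
    have := Finset.single_le_sum (f := fun j => h (k + 1 - j))
      (fun j hj => by
        rw [Finset.mem_Icc] at hj
        exact (hpos (k + 1 - j) (by omega)).le)
      (Finset.mem_Icc.mpr ⟨le_rfl, by omega⟩ : 1 ∈ Finset.Icc 1 p)
    simpa using this
  have hdouble : ∀ k, p ≤ k → 2 * h k ≤ h (k + 2) := by
    intro k hk
    have hsub : ∑ j ∈ Finset.Icc 1 2, h (k + 2 - j) ≤ ∑ j ∈ Finset.Icc 1 p, h (k + 2 - j) :=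
      Finset.sum_le_sum_of_subset_of_nonneg (Finset.Icc_subset_Icc_right hp)
        (fun j hj _ => by
          rw [Finset.mem_Icc] at hj
          exact (hpos (k + 2 - j) (by omega)).le)
    have h12 : Finset.Icc 1 2 = ({1, 2} : Finset ℕ) := by decide
    rw [h12, Finset.sum_pair (by norm_num)] at hsub
    have e1 : k + 2 - 1 = k + 1 := by omega
    have e2 : k + 2 - 2 = k := by omega
    rw [e1, e2] at hsub
    rw [hrec (k + 2) (by omega)]
    have := hmono k hk
    linarith
  set q : ℝ := (Real.sqrt 2)⁻¹ with hq_def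
  have hs2 : (0:ℝ) < Real.sqrt 2 := Real.sqrt_pos.mpr (by norm_num)
  have hq0 : 0 < q := inv_pos.mpr hs2
  have hq1 : q < 1 := by
    rw [hq_def, inv_lt_one_iff₀]
    right
    nlinarith [Real.sq_sqrt (by norm_num : (0:ℝ) ≤ 2), hs2]
  have hq2 : q ^ 2 = 1 / 2 := by
    rw [hq_def, inv_pow, Real.sq_sqrt (by norm_num : (0:ℝ) ≤ 2)]
    norm_num
  set C : ℝ := max (1 / h p) (q⁻¹ * (1 / h (p + 1))) with hC_def
  have key : ∀ m, 1 / h (p + m) ≤ C * q ^ m := by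
    intro m
    induction m using Nat.strong_induction_on with
    | _ m ih =>
      match m with
      | 0 =>
        show 1 / h (p + 0) ≤ C * q ^ 0
        rw [pow_zero, mul_one, Nat.add_zero]
        exact le_max_left _ _
      | 1 =>
        have h1 : q⁻¹ * (1 / h (p + 1)) ≤ C := le_max_right _ _
        have h2 : (q⁻¹ * (1 / h (p + 1))) * q ≤ C * q :=
          mul_le_mul_of_nonneg_right h1 hq0.le
        have h3 : (q⁻¹ * (1 / h (p + 1))) * q = 1 / h (p + 1) := by
          rw [mul_comm, ← mul_assoc, mul_inv_cancel₀ hq0.ne', one_mul]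
        show 1 / h (p + 1) ≤ C * q ^ 1
        rw [pow_one, ← h3]
        exact h2
      | (n + 2) =>
        have hpn : 0 < h (p + n) := hpos _ (by omega)
        have hpn2 : 0 < h (p + n + 2) := hpos _ (by omega)
        have hd : 2 * h (p + n) ≤ h (p + n + 2) := hdouble (p + n) (by omega)
        have ihn : 1 / h (p + n) ≤ C * q ^ n := ih n (by omega)
        have step : 1 / h (p + n + 2) ≤ (1 / h (p + n)) / 2 := by
          rw [div_le_div_iff₀ hpn2 (by norm_num)]
          nlinarith [mul_le_mul_of_nonneg_left hd (le_of_lt (one_div_pos.mpr hpn)),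
            one_div_mul_cancel hpn.ne']
        have : 1 / h (p + (n + 2)) ≤ (C * q ^ n) / 2 := by
          rw [show p + (n + 2) = p + n + 2 from by omega]
          calc 1 / h (p + n + 2) ≤ (1 / h (p + n)) / 2 := step
            _ ≤ (C * q ^ n) / 2 := by linarith
        calc 1 / h (p + (n + 2)) ≤ (C * q ^ n) / 2 := this
          _ = C * q ^ (n + 2) := by
              rw [pow_add, hq2]; ring
  have hC0 : 0 < C := lt_of_lt_of_le (one_div_pos.mpr (hpos p (by omega))) (le_max_left _ _)
  apply (summable_nat_add_iff p).mp
  refine Summable.of_nonneg_of_le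
    (fun n => (one_div_pos.mpr (hpos (n + p + 1) (by omega))).le)
    (fun n => ?_)
    ((summable_geometric_of_lt_one hq0.le hq1).mul_left (C * q))
  calc 1 / h (n + p + 1) = 1 / h (p + (n + 1)) := by ring_nf
    _ ≤ C * q ^ (n + 1) := key (n + 1)
    _ = (C * q) * q ^ n := by ring
end

section
/- Let p ≥ 2 be an integer and let r₁, …, r_p be positive reals. Define h : ℕ → ℝ by h k = r₁ / r k for 1 ≤ k ≤ p and h k = ∑_{j=1}^{p} h (k−j) for k > p. Then the ratio h k / h (k+1) converges to 1/φ₁ as k → ∞, where φ₁ is the unique positive real root of P_p(x) = x^p − x^{p−1} − ⋯ − x − 1; in particular 1/φ₁ < 1. -/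
open Finset Filter in
private lemma aux_limit_pos (p : ℕ) (hp : 1 ≤ p) (w : ℕ → ℝ) (hw : ∀ j, 0 < w j)
    (hwsum : ∑ j ∈ Finset.Icc 1 p, w j = 1) (a : ℕ → ℝ) (ha : ∀ k, 0 < a k)
    (hreca : ∀ k, p ≤ k → a k = ∑ j ∈ Finset.Icc 1 p, w j * a (k - j)) :
    ∃ L, 0 < L ∧ Filter.Tendsto a Filter.atTop (nhds L) := by
  have hWne : ∀ k : ℕ, (Finset.Icc k (k + p - 1)).Nonempty :=
    fun k => ⟨k, by simp [Finset.mem_Icc]; omega⟩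
  set M : ℕ → ℝ := fun k => (Finset.Icc k (k + p - 1)).sup' (hWne k) a with hM
  set m : ℕ → ℝ := fun k => (Finset.Icc k (k + p - 1)).inf' (hWne k) a with hm
  -- window bounds propagate forward
  have lemA : ∀ k i, k ≤ i → m k ≤ a i ∧ a i ≤ M k := by
    intro k i
    induction i using Nat.strong_induction_on with
    | _ i ih =>
      intro hki
      by_cases hcase : i < k + p
      · have hmem : i ∈ Finset.Icc k (k + p - 1) := by simp [Finset.mem_Icc]; omega
        exact ⟨Finset.inf'_le a hmem, Finset.le_sup' a hmem⟩
      · have hpi : p ≤ i := by omega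
        rw [hreca i hpi]
        constructor
        · calc m k = ∑ j ∈ Finset.Icc 1 p, w j * m k := by
                rw [← Finset.sum_mul, hwsum, one_mul]
            _ ≤ ∑ j ∈ Finset.Icc 1 p, w j * a (i - j) := by
                apply Finset.sum_le_sum
                intro j hj
                rw [Finset.mem_Icc] at hj
                exact mul_le_mul_of_nonneg_left
                  ((ih (i - j) (by omega) (by omega)).1) (hw j).le
        · calc ∑ j ∈ Finset.Icc 1 p, w j * a (i - j)
              ≤ ∑ j ∈ Finset.Icc 1 p, w j * M k := by
                apply Finset.sum_le_sum
                intro j hj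
                rw [Finset.mem_Icc] at hj
                exact mul_le_mul_of_nonneg_left
                  ((ih (i - j) (by omega) (by omega)).2) (hw j).le
            _ = M k := by rw [← Finset.sum_mul, hwsum, one_mul]
  have hgapnn : ∀ k, 0 ≤ M k - m k := by
    intro k
    obtain ⟨h1, h2⟩ := lemA k k le_rfl
    linarith
  have h1mem : (1 : ℕ) ∈ Finset.Icc 1 p := by simp [Finset.mem_Icc]; omega
  set δ : ℝ := (Finset.Icc 1 p).inf' ⟨1, h1mem⟩ w with hδ
  have hδpos : 0 < δ := by
    rw [hδ]; refine (Finset.lt_inf'_iff _).2 ?_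
    exact fun j _ => hw j
  have hδle : ∀ j ∈ Finset.Icc 1 p, δ ≤ w j := fun j hj => Finset.inf'_le w hj
  have hδ1 : δ ≤ 1 := by
    have h2 : w 1 ≤ ∑ j ∈ Finset.Icc 1 p, w j :=
      Finset.single_le_sum (fun j _ => (hw j).le) h1mem
    have := hδle 1 h1mem
    linarith
  -- contraction claims
  have claim1 : ∀ k istar, istar ∈ Finset.Icc k (k + p - 1) → a istar = m k →
      ∀ i, k + p ≤ i → i ≤ istar + p → a i ≤ M k - δ * (M k - m k) := by
    intro k istar hstar hstareq i hi1 hi2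
    rw [Finset.mem_Icc] at hstar
    have hj0 : i - istar ∈ Finset.Icc 1 p := by simp [Finset.mem_Icc]; omega
    rw [hreca i (by omega), ← Finset.add_sum_erase _ _ hj0]
    have hidx : i - (i - istar) = istar := by omega
    rw [hidx, hstareq]
    have hrest : ∑ j ∈ (Finset.Icc 1 p).erase (i - istar), w j * a (i - j)
        ≤ (1 - w (i - istar)) * M k := by
      have h1 : ∑ j ∈ (Finset.Icc 1 p).erase (i - istar), w j * a (i - j)
          ≤ ∑ j ∈ (Finset.Icc 1 p).erase (i - istar), w j * M k := by
        apply Finset.sum_le_sum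
        intro j hj
        have hj' := Finset.mem_of_mem_erase hj
        rw [Finset.mem_Icc] at hj'
        exact mul_le_mul_of_nonneg_left ((lemA k (i - j) (by omega)).2) (hw j).le
      have h2 : ∑ j ∈ (Finset.Icc 1 p).erase (i - istar), w j = 1 - w (i - istar) := by
        have h3 := Finset.add_sum_erase _ w hj0
        rw [hwsum] at h3
        linarith
      rw [← Finset.sum_mul, h2] at h1
      exact h1
    have hw0 := hδle _ hj0
    have hgap := hgapnn k
    nlinarith [mul_le_mul_of_nonneg_right hw0 hgap]
  have claim2 : ∀ k istar, istar ∈ Finset.Icc k (k + p - 1) → a istar = m k →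
      ∀ i, k + p ≤ i → i < k + 2 * p → a i ≤ M k - δ * δ * (M k - m k) := by
    intro k istar hstar hstareq i hi1 hi2
    have hstar' := hstar
    rw [Finset.mem_Icc] at hstar'
    by_cases hle : i ≤ istar + p
    · have := claim1 k istar hstar hstareq i hi1 hle
      have hgap := hgapnn k
      nlinarith [mul_le_mul_of_nonneg_right hδ1 (mul_nonneg hδpos.le hgap)]
    · push_neg at hle
      have hj1 : i - (istar + p) ∈ Finset.Icc 1 p := by simp [Finset.mem_Icc]; omega
      rw [hreca i (by omega), ← Finset.add_sum_erase _ _ hj1]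
      have hidx : i - (i - (istar + p)) = istar + p := by omega
      rw [hidx]
      have hs : a (istar + p) ≤ M k - δ * (M k - m k) :=
        claim1 k istar hstar hstareq (istar + p) (by omega) le_rfl
      have hrest : ∑ j ∈ (Finset.Icc 1 p).erase (i - (istar + p)), w j * a (i - j)
          ≤ (1 - w (i - (istar + p))) * M k := by
        have h1 : ∑ j ∈ (Finset.Icc 1 p).erase (i - (istar + p)), w j * a (i - j)
            ≤ ∑ j ∈ (Finset.Icc 1 p).erase (i - (istar + p)), w j * M k := by
          apply Finset.sum_le_sum
          intro j hj
          have hj' := Finset.mem_of_mem_erase hj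
          rw [Finset.mem_Icc] at hj'
          exact mul_le_mul_of_nonneg_left ((lemA k (i - j) (by omega)).2) (hw j).le
        have h2 : ∑ j ∈ (Finset.Icc 1 p).erase (i - (istar + p)), w j
            = 1 - w (i - (istar + p)) := by
          have h3 := Finset.add_sum_erase _ w hj1
          rw [hwsum] at h3
          linarith
        rw [← Finset.sum_mul, h2] at h1
        exact h1
      have hw1 := hδle _ hj1
      have hgap := hgapnn k
      have hwpos := hw (i - (istar + p))
      nlinarith [mul_le_mul_of_nonneg_right hw1 (mul_nonneg hδpos.le hgap),
        mul_le_mul_of_nonneg_left hs hwpos.le]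
  have lemB : ∀ k, M (k + p) - m (k + p) ≤ (1 - δ * δ) * (M k - m k) := by
    intro k
    obtain ⟨istar, hstar, hstareq⟩ := Finset.exists_mem_eq_inf' (hWne k) a
    have hMk : M (k + p) ≤ M k - δ * δ * (M k - m k) := by
      apply Finset.sup'_le
      intro i hi
      rw [Finset.mem_Icc] at hi
      exact claim2 k istar hstar hstareq.symm i (by omega) (by omega)
    have hmk : m k ≤ m (k + p) := by
      apply Finset.le_inf'
      intro i hi
      rw [Finset.mem_Icc] at hi
      exact (lemA k i (by omega)).1
    linarith
  have hlnn : 0 ≤ 1 - δ * δ := by nlinarith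
  have hllt : 1 - δ * δ < 1 := by nlinarith
  have hgeo : ∀ n, M (n * p) - m (n * p) ≤ (1 - δ * δ) ^ n * (M 0 - m 0) := by
    intro n
    induction n with
    | zero => simp
    | succ n ih =>
      have := lemB (n * p)
      have hstep : M (n * p + p) - m (n * p + p) ≤ (1 - δ * δ) ^ (n + 1) * (M 0 - m 0) := by
        calc M (n * p + p) - m (n * p + p) ≤ (1 - δ * δ) * (M (n * p) - m (n * p)) := this
          _ ≤ (1 - δ * δ) * ((1 - δ * δ) ^ n * (M 0 - m 0)) :=
              mul_le_mul_of_nonneg_left ih hlnn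
          _ = (1 - δ * δ) ^ (n + 1) * (M 0 - m 0) := by ring
      have : (n + 1) * p = n * p + p := by ring
      rw [this]
      exact hstep
  have hcauchy : CauchySeq a := by
    rw [Metric.cauchySeq_iff]
    intro ε hε
    have h0 : Filter.Tendsto (fun n => (1 - δ * δ) ^ n * (M 0 - m 0)) Filter.atTop (nhds 0) := by
      have := (tendsto_pow_atTop_nhds_zero_of_lt_one hlnn hllt).mul_const (M 0 - m 0)
      simpa using this
    obtain ⟨n, hn⟩ := (h0.eventually (gt_mem_nhds hε)).exists
    refine ⟨n * p, fun i hi j hj => ?_⟩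
    rw [Real.dist_eq]
    have hA := lemA (n * p) i hi
    have hB := lemA (n * p) j hj
    have := hgeo n
    rw [abs_sub_lt_iff]
    constructor <;> linarith
  obtain ⟨L, hL⟩ := cauchySeq_tendsto_of_complete hcauchy
  have hm0pos : 0 < m 0 := by
    obtain ⟨i, hi, heq⟩ := Finset.exists_mem_eq_inf' (hWne 0) a
    have : m 0 = a i := heq
    rw [this]
    exact ha i
  have hLge : m 0 ≤ L := ge_of_tendsto' hL (fun i => (lemA 0 i (Nat.zero_le i)).1)
  exact ⟨L, lt_of_lt_of_le hm0pos hLge, hL⟩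

/-- for a `p`-order type-1 Fibonacci resistor network with positive
initial resistances, the ratio `h k / h (k+1)` tends to `1/φ₁`, where `φ₁` is the
unique positive real root of `P_p(x) = x^p - x^(p-1) - ⋯ - x - 1`; in particular
`1/φ₁ < 1`. -/
theorem p_order_network_ratio_limit (p : ℕ) (hp : 2 ≤ p) (φ₁ : ℝ)
    (hφ₁pos : 0 < φ₁)
    (hφ₁root : φ₁ ^ p - ∑ k ∈ Finset.range p, φ₁ ^ k = 0)
    (hφ₁uniq : ∀ x : ℝ, 0 < x → x ^ p - ∑ k ∈ Finset.range p, x ^ k = 0 → x = φ₁)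
    (r : ℕ → ℝ) (hr : ∀ k, 1 ≤ k → k ≤ p → 0 < r k) (h : ℕ → ℝ)
    (hinit : ∀ k, 1 ≤ k → k ≤ p → h k = r 1 / r k)
    (hrec : ∀ k, p < k → h k = ∑ j ∈ Finset.Icc 1 p, h (k - j)) :
    Filter.Tendsto (fun k => h k / h (k + 1)) Filter.atTop (nhds (1 / φ₁)) ∧
      1 / φ₁ < 1 := by
  have hne : φ₁ ≠ 0 := ne_of_gt hφ₁pos
  have hroot : ∑ k ∈ Finset.range p, φ₁ ^ k = φ₁ ^ p := by linarith
  -- φ₁ > 1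
  have hφ1 : 1 < φ₁ := by
    by_contra hle
    push_neg at hle
    have hterm : ∀ k ∈ Finset.range p, φ₁ ^ p ≤ φ₁ ^ k := by
      intro k hk
      exact pow_le_pow_of_le_one hφ₁pos.le hle (le_of_lt (Finset.mem_range.mp hk))
    have hcard := Finset.card_nsmul_le_sum (Finset.range p) _ _ hterm
    rw [Finset.card_range, hroot, nsmul_eq_mul] at hcard
    have hppos : (0:ℝ) < φ₁ ^ p := pow_pos hφ₁pos p
    have h2p : (2:ℝ) ≤ (p:ℝ) := by exact_mod_cast hp
    nlinarith
  -- positivity of h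
  have hhpos : ∀ k, 1 ≤ k → 0 < h k := by
    intro k
    induction k using Nat.strong_induction_on with
    | _ k ih =>
      intro hk1
      by_cases hkp : k ≤ p
      · rw [hinit k hk1 hkp]
        exact div_pos (hr 1 le_rfl (by omega)) (hr k hk1 hkp)
      · rw [hrec k (by omega)]
        apply Finset.sum_pos
        · intro j hj
          rw [Finset.mem_Icc] at hj
          exact ih (k - j) (by omega) (by omega)
        · exact ⟨1, by simp [Finset.mem_Icc]; omega⟩
  -- weights
  set w : ℕ → ℝ := fun j => (1 / φ₁) ^ j with hw
  have hwpos : ∀ j, 0 < w j := fun j => pow_pos (by positivity) j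
  have hwsum : ∑ j ∈ Finset.Icc 1 p, w j = 1 := by
    have hs : ∑ j ∈ Finset.Icc 1 p, w j * φ₁ ^ p = φ₁ ^ p := by
      have hterm : ∀ j ∈ Finset.Icc 1 p, w j * φ₁ ^ p = φ₁ ^ (p - j) := by
        intro j hj
        rw [Finset.mem_Icc] at hj
        have e : φ₁ ^ p = φ₁ ^ j * φ₁ ^ (p - j) := by
          rw [← pow_add]
          congr 1
          omega
        show (1 / φ₁) ^ j * φ₁ ^ p = φ₁ ^ (p - j)
        rw [e, one_div, inv_pow, ← mul_assoc, inv_mul_cancel₀ (pow_ne_zero _ hne), one_mul]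
      rw [Finset.sum_congr rfl hterm]
      rw [show (∑ j ∈ Finset.Icc 1 p, φ₁ ^ (p - j)) = ∑ k ∈ Finset.range p, φ₁ ^ k from ?_]
      · exact hroot
      · apply Finset.sum_nbij' (i := fun j => p - j) (j := fun k => p - k)
        · intro x hx
          rw [Finset.mem_Icc] at hx
          rw [Finset.mem_range]
          omega
        · intro x hx
          rw [Finset.mem_range] at hx
          rw [Finset.mem_Icc]
          omega
        · intro x hx
          rw [Finset.mem_Icc] at hx
          omega
        · intro x hx
          rw [Finset.mem_range] at hx
          omega
        · intro x _
          rfl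
    rw [← Finset.sum_mul] at hs
    exact mul_right_cancel₀ (pow_ne_zero _ hne) (by rw [hs, one_mul])
  -- the normalized sequence
  set a : ℕ → ℝ := fun k => h (k + 1) / φ₁ ^ (k + 1) with ha
  have hapos : ∀ k, 0 < a k := fun k => div_pos (hhpos (k + 1) (by omega)) (pow_pos hφ₁pos _)
  have hreca : ∀ k, p ≤ k → a k = ∑ j ∈ Finset.Icc 1 p, w j * a (k - j) := by
    intro k hk
    have hkrec := hrec (k + 1) (by omega)
    rw [ha]
    simp only
    rw [hkrec, Finset.sum_div]
    apply Finset.sum_congr rfl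
    intro j hj
    rw [Finset.mem_Icc] at hj
    have e1 : k + 1 - j = (k - j) + 1 := by omega
    have e2 : φ₁ ^ (k + 1) = φ₁ ^ j * φ₁ ^ ((k - j) + 1) := by
      rw [← pow_add]
      congr 1
      omega
    rw [e1, e2]
    show _ = (1 / φ₁) ^ j * (h (k - j + 1) / φ₁ ^ (k - j + 1))
    rw [one_div, inv_pow]
    field_simp
  obtain ⟨L, hLpos, hLtend⟩ := aux_limit_pos p (by omega) w hwpos hwsum a hapos hreca
  constructor
  · have h1 : Filter.Tendsto (fun k => a (k - 1)) Filter.atTop (nhds L) :=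
      hLtend.comp (Filter.tendsto_sub_atTop_nat 1)
    have h2 : Filter.Tendsto (fun k => a (k - 1) / (a k * φ₁)) Filter.atTop
        (nhds (L / (L * φ₁))) :=
      h1.div (hLtend.mul_const φ₁) (by positivity)
    have h3 : L / (L * φ₁) = 1 / φ₁ := by
      field_simp
    rw [h3] at h2
    apply h2.congr'
    filter_upwards [Filter.eventually_ge_atTop 1] with k hk
    have e1 : k - 1 + 1 = k := by omega
    have hk1 : 0 < h k := hhpos k hk
    have hk2 : 0 < h (k + 1) := hhpos (k + 1) (by omega)
    rw [ha]
    simp only [e1]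
    rw [pow_succ]
    field_simp [hk2.ne']
  · rw [div_lt_one hφ₁pos]
    exact hφ1
end

section
/- Let p ≥ 2 be an integer. For each i ∈ {1, …, p} define w⁽ⁱ⁾ : ℕ → ℝ by w⁽ⁱ⁾ k = 1 if k = i and 0 for all other k ≤ p, and w⁽ⁱ⁾ k = ∑_{j=1}^{p} w⁽ⁱ⁾ (k−j) for k > p. Then w⁽¹⁾ k > 0 and w⁽ⁱ⁾ k ≥ 0 for all k > p and all i, and the sequence of partial sums of the series ∑_{k=p+1}^∞ 1/( w⁽¹⁾ k + ∑_{i=2}^{p} t_i · w⁽ⁱ⁾ k ) converges uniformly in (t₂, …, t_p) on [0, +∞)^{p−1}. -/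
/-- for the basis solutions `w i` (`i = 1, …, p`) of the `p`-order
Fibonacci recurrence (with initial data `w i k = δ_{ik}` for `1 ≤ k ≤ p`), one has
`w 1 k > 0` and `w i k ≥ 0` for all `k > p`, and the partial sums of
`∑_{k=p+1}^∞ 1/(w 1 k + ∑_{i=2}^p t i · w i k)` converge uniformly in
`(t 2, …, t p)` on `[0, +∞)^(p-1)`. -/
theorem p_order_basis_uniform_convergence (p : ℕ) (hp : 2 ≤ p)
    (w : ℕ → ℕ → ℝ)
    (hinit : ∀ i, 1 ≤ i → i ≤ p → ∀ k, 1 ≤ k → k ≤ p →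
      w i k = if k = i then 1 else 0)
    (hrec : ∀ i, 1 ≤ i → i ≤ p → ∀ k, p < k →
      w i k = ∑ j ∈ Finset.Icc 1 p, w i (k - j)) :
    (∀ k, p < k → 0 < w 1 k) ∧
    (∀ i, 1 ≤ i → i ≤ p → ∀ k, p < k → 0 ≤ w i k) ∧
    ∃ S : (ℕ → ℝ) → ℝ,
      TendstoUniformlyOn
        (fun (n : ℕ) (t : ℕ → ℝ) =>
          ∑ k ∈ Finset.Icc (p + 1) n,
            1 / (w 1 k + ∑ i ∈ Finset.Icc 2 p, t i * w i k))
        S Filter.atTop {t : ℕ → ℝ | ∀ i, 2 ≤ i → i ≤ p → 0 ≤ t i} := by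
  have hnn : ∀ k, 1 ≤ k → ∀ i, 1 ≤ i → i ≤ p → 0 ≤ w i k := by
    intro k
    induction k using Nat.strong_induction_on with
    | _ k ih =>
      intro hk i hi1 hip
      by_cases h : k ≤ p
      · rw [hinit i hi1 hip k hk h]
        split <;> norm_num
      · push_neg at h
        rw [hrec i hi1 hip k h]
        refine Finset.sum_nonneg fun j hj => ?_
        rw [Finset.mem_Icc] at hj
        exact ih (k - j) (by omega) (by omega) i hi1 hip
  have hmono : ∀ k, p < k → w 1 k ≤ w 1 (k + 1) := by
    intro k hk
    rw [hrec 1 le_rfl (by omega) (k+1) (by omega)]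
    have h1 : (1:ℕ) ∈ Finset.Icc 1 p := by rw [Finset.mem_Icc]; omega
    have := Finset.single_le_sum (f := fun j => w 1 (k + 1 - j))
      (fun j hj => by rw [Finset.mem_Icc] at hj; exact hnn _ (by omega) 1 le_rfl (by omega)) h1
    simpa using this
  have hmono' : ∀ a b, p < a → a ≤ b → w 1 a ≤ w 1 b := by
    intro a b ha hab
    induction b, hab using Nat.le_induction with
    | base => exact le_rfl
    | succ n hn ih => exact le_trans ih (hmono n (by omega))
  have hge1 : ∀ k, p < k → 1 ≤ w 1 k := by
    intro k hk
    have base : 1 ≤ w 1 (p + 1) := by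
      rw [hrec 1 le_rfl (by omega) (p+1) (by omega)]
      have hpmem : p ∈ Finset.Icc 1 p := by rw [Finset.mem_Icc]; omega
      have h1 := Finset.single_le_sum (f := fun j => w 1 (p + 1 - j))
        (fun j hj => by rw [Finset.mem_Icc] at hj; exact hnn _ (by omega) 1 le_rfl (by omega)) hpmem
      have h2 : w 1 (p + 1 - p) = 1 := by
        have : p + 1 - p = 1 := by omega
        rw [this, hinit 1 le_rfl (by omega) 1 le_rfl (by omega)]; simp
      calc (1:ℝ) = w 1 (p + 1 - p) := h2.symm
        _ ≤ ∑ j ∈ Finset.Icc 1 p, w 1 (p + 1 - j) := h1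
    calc (1:ℝ) ≤ w 1 (p+1) := base
      _ ≤ w 1 k := hmono' _ _ (by omega) (by omega)
  have hpos : ∀ k, p < k → 0 < w 1 k := fun k hk => lt_of_lt_of_le one_pos (hge1 k hk)
  have hdouble : ∀ k, p < k → 2 * w 1 k ≤ w 1 (k + 2) := by
    intro k hk
    rw [hrec 1 le_rfl (by omega) (k+2) (by omega)]
    have hsub : ({1, 2} : Finset ℕ) ⊆ Finset.Icc 1 p := by
      intro x hx
      simp only [Finset.mem_insert, Finset.mem_singleton] at hx
      rw [Finset.mem_Icc]; omega
    have hs := Finset.sum_le_sum_of_subset_of_nonneg (f := fun j => w 1 (k + 2 - j)) hsub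
      (fun j hj _ => by rw [Finset.mem_Icc] at hj; exact hnn _ (by omega) 1 le_rfl (by omega))
    have hpair : ∑ j ∈ ({1,2} : Finset ℕ), w 1 (k + 2 - j) = w 1 (k+1) + w 1 k := by
      rw [Finset.sum_pair (by omega)]
      congr 1 <;> congr 1 <;> omega
    rw [hpair] at hs
    have := hmono k hk
    linarith
  have hpow : ∀ m k, p < k → (2:ℝ)^m ≤ w 1 (k + 2*m) := by
    intro m
    induction m with
    | zero => intro k hk; simpa using hge1 k hk
    | succ m ih =>
      intro k hk
      have h1 := ih k hk
      have h2 := hdouble (k + 2*m) (by omega)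
      have h3 : k + 2*(m+1) = k + 2*m + 2 := by ring
      rw [h3, pow_succ]
      nlinarith [pow_pos (by norm_num : (0:ℝ) < 2) m]
  have hbound : ∀ k, p < k → (2:ℝ)^((k - (p+1))/2) ≤ w 1 k := by
    intro k hk
    set m := (k - (p+1))/2 with hm
    have h2 := hpow m (p+1) (by omega)
    have h3 : p + 1 + 2*m ≤ k := by omega
    exact le_trans h2 (hmono' _ _ (by omega) h3)
  refine ⟨hpos, fun i hi1 hip k hk => hnn k (by omega) i hi1 hip, ?_⟩
  set s := {t : ℕ → ℝ | ∀ i, 2 ≤ i → i ≤ p → 0 ≤ t i} with hsdef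
  set f : ℕ → (ℕ → ℝ) → ℝ := fun k t =>
    if p < k then 1 / (w 1 k + ∑ i ∈ Finset.Icc 2 p, t i * w i k) else 0 with hf
  have hsq : (0:ℝ) < Real.sqrt 2 := Real.sqrt_pos.mpr (by norm_num)
  set a : ℝ := (Real.sqrt 2)⁻¹ with haa
  have ha0 : 0 < a := by positivity
  have ha1 : a < 1 := by
    rw [haa, inv_lt_one_iff₀]
    right
    nlinarith [Real.sq_sqrt (by norm_num : (2:ℝ) ≥ 0)]
  have ha2 : a^2 = (2:ℝ)⁻¹ := by
    rw [haa, inv_pow, Real.sq_sqrt (by norm_num : (0:ℝ) ≤ 2)]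
  set u : ℕ → ℝ := fun k => (Real.sqrt 2)^(p+2) * a^k with hudef
  have husum : Summable u := (summable_geometric_of_lt_one ha0.le ha1).mul_left _
  have hfu : ∀ k t, t ∈ s → ‖f k t‖ ≤ u k := by
    intro k t ht
    by_cases hk : p < k
    · have hsum0 : 0 ≤ ∑ i ∈ Finset.Icc 2 p, t i * w i k := by
        refine Finset.sum_nonneg fun i hi => ?_
        rw [Finset.mem_Icc] at hi
        exact mul_nonneg (ht i hi.1 hi.2) (hnn k (by omega) i (by omega) hi.2)
      have hD : 0 < w 1 k + ∑ i ∈ Finset.Icc 2 p, t i * w i k := by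
        have := hpos k hk; linarith
      have hfval : f k t = 1 / (w 1 k + ∑ i ∈ Finset.Icc 2 p, t i * w i k) := by
        rw [hf]; simp [hk]
      set m := (k - (p+1))/2 with hm
      have h2m : (2:ℝ)^m ≤ w 1 k := hbound k hk
      have hpm : (0:ℝ) < 2^m := by positivity
      have step1 : 1 / (w 1 k + ∑ i ∈ Finset.Icc 2 p, t i * w i k) ≤ ((2:ℝ)^m)⁻¹ := by
        rw [one_div]
        apply inv_anti₀ hpm
        linarith
      have step2 : ((2:ℝ)^m)⁻¹ = a^(2*m) := by
        rw [pow_mul, ha2, inv_pow]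
      have step3 : a^(2*m) ≤ a^(k - (p+2)) := by
        apply pow_le_pow_of_le_one ha0.le ha1.le
        omega
      have step4 : a^(k - (p+2)) ≤ (Real.sqrt 2)^(p+2) * a^k := by
        have key : a ^ (k - (p+2)) * a^(p+2) ≤ a ^ k := by
          rw [← pow_add]
          exact pow_le_pow_of_le_one ha0.le ha1.le (by omega)
        have hap : (0:ℝ) < a^(p+2) := by positivity
        rw [← le_div_iff₀ hap] at key
        calc a^(k-(p+2)) ≤ a^k / a^(p+2) := key
          _ = (Real.sqrt 2)^(p+2) * a^k := by
              rw [div_eq_mul_inv, ← inv_pow, haa, inv_inv, mul_comm]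
      rw [hfval, Real.norm_of_nonneg (by positivity)]
      calc 1 / (w 1 k + ∑ i ∈ Finset.Icc 2 p, t i * w i k)
          ≤ ((2:ℝ)^m)⁻¹ := step1
        _ = a^(2*m) := step2
        _ ≤ a^(k - (p+2)) := step3
        _ ≤ (Real.sqrt 2)^(p+2) * a^k := step4
        _ = u k := rfl
    · have : f k t = 0 := by rw [hf]; simp [hk]
      rw [this, norm_zero, hudef]
      positivity
  have hG := tendstoUniformlyOn_tsum_nat husum hfu
  refine ⟨fun t => ∑' k, f k t, ?_⟩
  have heq : ∀ n (t : ℕ → ℝ),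
      (∑ k ∈ Finset.Icc (p+1) n, 1/(w 1 k + ∑ i ∈ Finset.Icc 2 p, t i * w i k))
        = ∑ k ∈ Finset.range (n+1), f k t := by
    intro n t
    have hfilter : Finset.Icc (p+1) n = (Finset.range (n+1)).filter (fun k => p < k) := by
      ext k
      simp only [Finset.mem_Icc, Finset.mem_filter, Finset.mem_range]
      omega
    rw [hfilter, hf, Finset.sum_filter]
  intro u' hu'
  have h1 := hG u' hu'
  have h2 := (Filter.tendsto_add_atTop_nat 1).eventually h1
  filter_upwards [h2] with n hn t ht
  rw [heq n t]
  exact hn t ht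
end
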